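/- arXiv:2012.03658 — 4 statements merged into one kernel-verified Lean document; each statement's English description precedes it below -/
import Mathlib

section
/- Let 0 = γ¹ < γ² < … < γ^q be given rates and L ≥ 1. Define vectors v^{k,q} ∈ ℝ^L recursively by v^{0,q} = 0, v^{1,q} = e_1 (first unit vector), v^{k,q} = (2^{γ^k} D v^{k−1,q} − v^{k−1,q})/(2^{γ^k} − 1) for 1 < k < q, and v^{k,q} = D v^{k−1,q} for k ≥ q, where D ∈ ℝ^{L×L} is the down-shift matrix (D e_j = e_{j+1} for j < L, D e_L = 0). Then the differences {v^{1,q} − v^{0,q}, v^{2,q} − v^{1,q}, …, v^{L,q} − v^{L−1,q}} form a basis of ℝ^L. -/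
/-- The down-shift operator on `ℝ^L`: `(D v)_{ℓ+1} = v_ℓ` and `(D v)_1 = 0`. -/
def reShift {L : ℕ} (v : Fin L → ℝ) : Fin L → ℝ :=
  fun ℓ => if (ℓ : ℕ) = 0 then 0
    else v ⟨(ℓ : ℕ) - 1, Nat.lt_of_le_of_lt (Nat.sub_le _ 1) ℓ.2⟩

/-- The Richardson extrapolation coefficient vectors `v^{k,q} ∈ ℝ^L`:
`v^{0,q} = 0`, `v^{1,q} = e_1`,
`v^{k,q} = (2^{γ^k} D v^{k−1,q} − v^{k−1,q})/(2^{γ^k} − 1)` for `1 < k < q`, and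
`v^{k,q} = D v^{k−1,q}` for `k ≥ q`, where `D` is the down-shift matrix. -/
noncomputable def reVec (L q : ℕ) (γ : ℕ → ℝ) : ℕ → Fin L → ℝ
  | 0 => 0
  | 1 => fun ℓ => if (ℓ : ℕ) = 0 then 1 else 0
  | (k + 2) =>
      if k + 2 < q then
        ((2 : ℝ) ^ (γ (k + 2)) - 1)⁻¹ •
          ((2 : ℝ) ^ (γ (k + 2)) • reShift (reVec L q γ (k + 1)) - reVec L q γ (k + 1))
      else reShift (reVec L q γ (k + 1))

open Finset

section aux

variable (L q : ℕ) (γ : ℕ → ℝ)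

lemma reVec_support : ∀ k, ∀ ℓ : Fin L, k ≤ (ℓ : ℕ) → reVec L q γ k ℓ = 0 := by
  intro k
  induction k with
  | zero => intro ℓ _; rfl
  | succ k ih =>
    match k with
    | 0 =>
      intro ℓ hℓ
      simp only [reVec]
      rw [if_neg (by omega)]
    | k + 1 =>
      intro ℓ hℓ
      have hsh : reShift (reVec L q γ (k + 1)) ℓ = 0 := by
        unfold reShift
        rw [if_neg (by omega)]
        exact ih _ (by simp; omega)
      simp only [reVec]
      split
      · simp [hsh, ih ℓ (by omega)]
      · exact hsh

lemma gamma_pos (hγ1 : γ 1 = 0) (hmono : ∀ j, 1 ≤ j → j < q → γ j < γ (j + 1)) :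
    ∀ j, 2 ≤ j → j ≤ q → 0 < γ j := by
  intro j
  induction j with
  | zero => omega
  | succ j ih =>
    intro h2 hq
    match j, h2 with
    | 1, _ => rw [← hγ1]; exact hmono 1 le_rfl (by omega)
    | (j+2), _ =>
      exact lt_trans (ih (by omega) (by omega)) (hmono _ (by omega) (by omega))

lemma reVec_lead (hγ1 : γ 1 = 0) (hmono : ∀ j, 1 ≤ j → j < q → γ j < γ (j + 1)) :
    ∀ k, ∀ ℓ : Fin L, (ℓ : ℕ) + 1 = k → 0 < reVec L q γ k ℓ := by
  intro k
  induction k with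
  | zero => omega
  | succ k ih =>
    match k with
    | 0 =>
      intro ℓ hℓ
      simp only [reVec]
      rw [if_pos (by omega)]
      norm_num
    | k + 1 =>
      intro ℓ hℓ
      have hℓ0 : (ℓ : ℕ) ≠ 0 := by omega
      have hprev : 0 < reShift (reVec L q γ (k + 1)) ℓ := by
        unfold reShift
        rw [if_neg hℓ0]
        exact ih _ (by simp; omega)
      simp only [reVec]
      split
      · rename_i hq
        have hγpos : 0 < γ (k + 2) := gamma_pos q γ hγ1 hmono (k+2) (by omega) (by omega)
        have h2 : (1:ℝ) < (2:ℝ) ^ (γ (k + 2)) := by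
          rw [← Real.rpow_zero 2]
          exact Real.rpow_lt_rpow_left_iff (by norm_num) |>.mpr hγpos
        have hz : reVec L q γ (k + 1) ℓ = 0 := reVec_support L q γ (k+1) ℓ (by omega)
        simp only [Pi.smul_apply, Pi.sub_apply, hz, smul_eq_mul, sub_zero]
        exact mul_pos (inv_pos.mpr (by linarith)) (mul_pos (by linarith) hprev)
      · exact hprev

end aux

/-- The differences `v^{k,q} − v^{k−1,q}`, `k = 1,…,L`, of the Richardson extrapolation
vectors form a basis of `ℝ^L`. -/
theorem stmt_4 (L q : ℕ) (hL : 1 ≤ L) (γ : ℕ → ℝ) (hγ1 : γ 1 = 0)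
    (hmono : ∀ j, 1 ≤ j → j < q → γ j < γ (j + 1)) :
    LinearIndependent ℝ
        (fun k : Fin L => reVec L q γ ((k : ℕ) + 1) - reVec L q γ (k : ℕ)) ∧
      Submodule.span ℝ
        (Set.range (fun k : Fin L => reVec L q γ ((k : ℕ) + 1) - reVec L q γ (k : ℕ)))
        = ⊤ := by
  set M : Matrix (Fin L) (Fin L) ℝ :=
    Matrix.of (fun k ℓ : Fin L => (reVec L q γ ((k : ℕ) + 1) - reVec L q γ (k : ℕ)) ℓ) with hM
  have htri : M.BlockTriangular OrderDual.toDual := by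
    intro i j hij
    have h : (i : ℕ) < (j : ℕ) := hij
    simp only [hM, Matrix.of_apply, Pi.sub_apply]
    rw [reVec_support L q γ _ j (by omega), reVec_support L q γ _ j (by omega), sub_zero]
  have hdiag : ∀ k : Fin L, 0 < M k k := by
    intro k
    simp only [hM, Matrix.of_apply, Pi.sub_apply]
    rw [reVec_support L q γ _ k le_rfl, sub_zero]
    exact reVec_lead L q γ hγ1 hmono _ k rfl
  have hdet : M.det ≠ 0 := by
    rw [Matrix.det_of_lowerTriangular M htri]
    exact ne_of_gt (Finset.prod_pos (fun k _ => hdiag k))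
  have hunit : IsUnit M := (Matrix.isUnit_iff_isUnit_det M).mpr (isUnit_iff_ne_zero.mpr hdet)
  have hli : LinearIndependent ℝ
      (fun k : Fin L => reVec L q γ ((k : ℕ) + 1) - reVec L q γ (k : ℕ)) := by
    have := Matrix.linearIndependent_rows_iff_isUnit.mpr hunit
    exact this
  exact ⟨hli, hli.span_eq_top_of_card_eq_finrank' (by simp)⟩
end

section
/- Under the pathwise asymptotic expansion assumption (Z_ℓ = Z + Σ_{j=2}^{q−1} c_j 2^{−ℓγ^j} + O_{L²}(2^{−ℓγ^q}) with 0 = γ¹ < … < γ^q and square-integrable c_j), the Richardson extrapolation differences satisfy Var(Σ_ℓ (v^{k,q}_ℓ − v^{k−1,q}_ℓ) Z_ℓ) ≤ c·2^{−2kγ^q} for all k, with c independent of k. -/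
open Finset MeasureTheory ProbabilityTheory

section auxx

lemma reShift_succ {n : ℕ} (v : Fin (n+1) → ℝ) (i : Fin n) :
    reShift v i.succ = v i.castSucc := by
  simp only [reShift, Fin.val_succ, Nat.add_sub_cancel, Nat.succ_ne_zero, if_false]
  congr 1

lemma shift_sum {k : ℕ} (v : Fin k → ℝ) (h : ℕ → ℝ)
    (hv : ∀ ℓ : Fin k, (ℓ : ℕ) + 1 = k → v ℓ = 0) :
    ∑ ℓ : Fin k, reShift v ℓ * h ℓ = ∑ ℓ : Fin k, v ℓ * h ((ℓ : ℕ) + 1) := by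
  cases k with
  | zero => simp
  | succ n =>
    rw [Fin.sum_univ_succ, Fin.sum_univ_castSucc (f := fun ℓ : Fin (n+1) => v ℓ * h ((ℓ:ℕ)+1))]
    have h0 : reShift v 0 * h 0 = 0 := by simp [reShift]
    have hlast : v (Fin.last n) * h ((Fin.last n : ℕ) + 1) = 0 := by
      rw [hv (Fin.last n) (by simp [Fin.last])]; ring
    simp only [Fin.val_zero]
    rw [h0, hlast, zero_add, add_zero]
    refine Finset.sum_congr rfl fun i _ => ?_
    rw [reShift_succ]
    simp [Fin.val_succ]

lemma shift_abs_sum {k : ℕ} (v : Fin k → ℝ) :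
    ∑ ℓ : Fin k, |reShift v ℓ| ≤ ∑ ℓ : Fin k, |v ℓ| := by
  cases k with
  | zero => simp
  | succ n =>
    rw [Fin.sum_univ_succ, Fin.sum_univ_castSucc (f := fun ℓ : Fin (n+1) => |v ℓ|)]
    have h0 : |reShift v 0| = 0 := by simp [reShift]
    rw [h0, zero_add]
    have : ∑ i : Fin n, |reShift v i.succ| = ∑ i : Fin n, |v i.castSucc| := by
      refine Finset.sum_congr rfl fun i _ => ?_
      rw [reShift_succ]
    rw [this]
    exact le_add_of_nonneg_right (abs_nonneg _)

lemma reVec_upper {L Q : ℕ} {γ : ℕ → ℝ} :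
    ∀ m (ℓ : Fin L), m ≤ (ℓ : ℕ) → reVec L Q γ m ℓ = 0
  | 0, ℓ, _ => by simp [reVec]
  | 1, ℓ, h => by
    simp only [reVec]
    rw [if_neg]; omega
  | (m+2), ℓ, h => by
    have ih := fun (ℓ' : Fin L) h' => reVec_upper (L := L) (Q := Q) (γ := γ) (m+1) ℓ' h'
    have hsh : reShift (reVec L Q γ (m+1)) ℓ = 0 := by
      unfold reShift
      split
      · rfl
      · exact ih _ (by simp; omega)
    rw [reVec]
    split
    · simp only [Pi.smul_apply, Pi.sub_apply, smul_eq_mul, hsh, ih ℓ (by omega)]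
      ring
    · exact hsh

lemma reVec_lower {L Q : ℕ} {γ : ℕ → ℝ} :
    ∀ m (ℓ : Fin L), (ℓ : ℕ) + max (Q - 1) 1 < m → reVec L Q γ m ℓ = 0
  | 0, ℓ, _ => by simp [reVec]
  | 1, ℓ, h => by
    exfalso
    have : 1 ≤ max (Q - 1) 1 := le_max_right _ _
    omega
  | (m+2), ℓ, h => by
    have ih := fun (ℓ' : Fin L) h' => reVec_lower (L := L) (Q := Q) (γ := γ) (m+1) ℓ' h'
    have hmax : Q - 1 ≤ max (Q - 1) 1 := le_max_left _ _
    have hsh : reShift (reVec L Q γ (m+1)) ℓ = 0 := by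
      unfold reShift
      split
      · rfl
      · refine ih _ ?_
        simp only []
        omega
    rw [reVec]
    split
    · exfalso; omega
    · exact hsh

lemma two_rpow_pos (x : ℝ) : (0:ℝ) < (2:ℝ) ^ x := Real.rpow_pos_of_pos two_pos x

lemma one_lt_two_rpow {x : ℝ} (hx : 0 < x) : (1:ℝ) < (2:ℝ) ^ x := by
  rw [Real.one_lt_rpow_iff_of_pos two_pos]
  exact Or.inl ⟨one_lt_two, hx⟩

lemma reVec_sum_one {L Q : ℕ} {γ : ℕ → ℝ}
    (hpos : ∀ j, 2 ≤ j → j < Q → 0 < γ j) :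
    ∀ m, 1 ≤ m → m ≤ L → ∑ ℓ : Fin L, reVec L Q γ m ℓ = 1
  | 0, h, _ => by omega
  | 1, _, hL => by
    simp only [reVec]
    have h0 : (0:ℕ) < L := by omega
    have : ∀ x : Fin L, (if (x:ℕ) = 0 then (1:ℝ) else 0) =
        (if x = (⟨0, h0⟩ : Fin L) then (1:ℝ) else 0) := by
      intro x; congr 1; simp [Fin.ext_iff]
    rw [Finset.sum_congr rfl (fun x _ => this x)]
    simp
  | (m+2), _, hL => by
    have ih := reVec_sum_one (L := L) (Q := Q) (γ := γ) hpos (m+1) (by omega) (by omega)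
    have hup : ∀ ℓ : Fin L, (ℓ:ℕ) + 1 = L → reVec L Q γ (m+1) ℓ = 0 := by
      intro ℓ hℓ
      exact reVec_upper (m+1) ℓ (by omega)
    have hsh : ∑ ℓ : Fin L, reShift (reVec L Q γ (m+1)) ℓ = 1 := by
      have := shift_sum (reVec L Q γ (m+1)) (fun _ => 1) hup
      simpa [ih] using this
    rw [reVec]
    split
    · rename_i hlt
      have hb : (1:ℝ) < (2:ℝ) ^ (γ (m+2)) := one_lt_two_rpow (hpos (m+2) (by omega) hlt)
      simp only [Pi.smul_apply, Pi.sub_apply, smul_eq_mul]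
      rw [Finset.sum_congr rfl (fun ℓ _ => by ring_nf :
        ∀ ℓ ∈ Finset.univ, ((2:ℝ) ^ (γ (m+2)) - 1)⁻¹ *
          ((2:ℝ) ^ (γ (m+2)) * reShift (reVec L Q γ (m+1)) ℓ - reVec L Q γ (m+1) ℓ) =
          ((2:ℝ) ^ (γ (m+2)) - 1)⁻¹ * (2:ℝ) ^ (γ (m+2)) * reShift (reVec L Q γ (m+1)) ℓ
          - ((2:ℝ) ^ (γ (m+2)) - 1)⁻¹ * reVec L Q γ (m+1) ℓ)]
      rw [Finset.sum_sub_distrib, ← Finset.mul_sum, ← Finset.mul_sum, hsh, ih]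
      have hne : (2:ℝ) ^ (γ (m+2)) - 1 ≠ 0 := by linarith
      field_simp
    · exact hsh

lemma reVec_kill {L Q : ℕ} {γ : ℕ → ℝ}
    (hpos : ∀ j', 2 ≤ j' → j' < Q → 0 < γ j') (j : ℕ) (hj2 : 2 ≤ j) (hjq : j + 1 ≤ Q) :
    ∀ m, m ≤ L → j ≤ m →
      ∑ ℓ : Fin L, reVec L Q γ m ℓ * (2:ℝ) ^ (-(((ℓ:ℕ):ℝ) + 1) * γ j) = 0
  | 0, _, hjm => by omega
  | 1, _, hjm => by omega
  | (m+2), hL, hjm => by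
    have hup : ∀ ℓ : Fin L, (ℓ:ℕ) + 1 = L → reVec L Q γ (m+1) ℓ = 0 := by
      intro ℓ hℓ
      exact reVec_upper (m+1) ℓ (by omega)
    -- shifted sum identity
    have hshift : ∑ ℓ : Fin L, reShift (reVec L Q γ (m+1)) ℓ * (2:ℝ) ^ (-(((ℓ:ℕ):ℝ) + 1) * γ j)
        = (2:ℝ) ^ (-(γ j)) *
          ∑ ℓ : Fin L, reVec L Q γ (m+1) ℓ * (2:ℝ) ^ (-(((ℓ:ℕ):ℝ) + 1) * γ j) := by
      rw [shift_sum (reVec L Q γ (m+1)) (fun i => (2:ℝ) ^ (-((i:ℝ) + 1) * γ j)) hup]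
      rw [Finset.mul_sum]
      refine Finset.sum_congr rfl fun ℓ _ => ?_
      have h1 : ((((ℓ:ℕ) + 1 : ℕ)):ℝ) = ((ℓ:ℕ):ℝ) + 1 := by push_cast; ring
      simp only [h1]
      rw [show -((((ℓ:ℕ):ℝ) + 1) + 1) * γ j = -(γ j) + (-(((ℓ:ℕ):ℝ) + 1) * γ j) by ring]
      rw [Real.rpow_add two_pos]
      ring
    rw [reVec]
    split
    · rename_i hlt
      have hb : (1:ℝ) < (2:ℝ) ^ (γ (m+2)) := one_lt_two_rpow (hpos (m+2) (by omega) hlt)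
      have hne : (2:ℝ) ^ (γ (m+2)) - 1 ≠ 0 := by linarith
      simp only [Pi.smul_apply, Pi.sub_apply, smul_eq_mul]
      rw [Finset.sum_congr rfl (fun ℓ _ => by ring_nf :
        ∀ ℓ ∈ Finset.univ, ((2:ℝ) ^ (γ (m+2)) - 1)⁻¹ *
          ((2:ℝ) ^ (γ (m+2)) * reShift (reVec L Q γ (m+1)) ℓ - reVec L Q γ (m+1) ℓ) *
          (2:ℝ) ^ (-(((ℓ:ℕ):ℝ) + 1) * γ j) =
          (((2:ℝ) ^ (γ (m+2)) - 1)⁻¹ * (2:ℝ) ^ (γ (m+2))) *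
            (reShift (reVec L Q γ (m+1)) ℓ * (2:ℝ) ^ (-(((ℓ:ℕ):ℝ) + 1) * γ j))
          - ((2:ℝ) ^ (γ (m+2)) - 1)⁻¹ *
            (reVec L Q γ (m+1) ℓ * (2:ℝ) ^ (-(((ℓ:ℕ):ℝ) + 1) * γ j)))]
      rw [Finset.sum_sub_distrib, ← Finset.mul_sum, ← Finset.mul_sum, hshift]
      rcases Nat.lt_or_ge j (m+2) with hcase | hcase
      · -- j ≤ m+1 : inner sum vanishes by induction
        have ih := reVec_kill (L := L) (Q := Q) (γ := γ) hpos j hj2 hjq (m+1) (by omega) (by omega)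
        rw [ih]; ring
      · -- j = m+2 : factor vanishes
        have hje : j = m + 2 := by omega
        have h1 : (2:ℝ) ^ (γ (m+2)) * (2:ℝ) ^ (-(γ j)) = 1 := by
          rw [hje, ← Real.rpow_add two_pos]
          simp
        linear_combination (((2:ℝ) ^ (γ (m+2)) - 1)⁻¹ *
          ∑ ℓ : Fin L, reVec L Q γ (m+1) ℓ * (2:ℝ) ^ (-(((ℓ:ℕ):ℝ) + 1) * γ j)) * h1
    · rename_i hge
      have ih := reVec_kill (L := L) (Q := Q) (γ := γ) hpos j hj2 hjq (m+1) (by omega) (by omega)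
      rw [hshift, ih]; ring

lemma reVec_absB_nonneg {Q : ℕ} {γ : ℕ → ℝ}
    (hpos : ∀ j', 2 ≤ j' → j' < Q → 0 < γ j') :
    (1:ℝ) ≤ 1 + ∑ j ∈ Icc 2 (Q-1), ((2:ℝ) ^ (γ j) + 1)/((2:ℝ) ^ (γ j) - 1) := by
  have : (0:ℝ) ≤ ∑ j ∈ Icc 2 (Q-1), ((2:ℝ) ^ (γ j) + 1)/((2:ℝ) ^ (γ j) - 1) := by
    refine Finset.sum_nonneg fun j hj => ?_
    rw [Finset.mem_Icc] at hj
    have hb : (1:ℝ) < (2:ℝ) ^ (γ j) := one_lt_two_rpow (hpos j hj.1 (by omega))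
    exact div_nonneg (by linarith) (by linarith)
  linarith

lemma reVec_abs_sum {L Q : ℕ} {γ : ℕ → ℝ}
    (hpos : ∀ j', 2 ≤ j' → j' < Q → 0 < γ j') :
    ∀ m, ∑ ℓ : Fin L, |reVec L Q γ m ℓ|
      ≤ (1 + ∑ j ∈ Icc 2 (Q-1), ((2:ℝ) ^ (γ j) + 1)/((2:ℝ) ^ (γ j) - 1)) ^ (min m Q)
  | 0 => by
    simp [reVec]
  | 1 => by
    have hB := reVec_absB_nonneg (γ := γ) hpos
    have h1 : ∑ ℓ : Fin L, |reVec L Q γ 1 ℓ| ≤ 1 := by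
      simp only [reVec]
      rcases Nat.eq_zero_or_pos L with hL | hL
      · subst hL; simp
      · have : ∀ x : Fin L, |if (x:ℕ) = 0 then (1:ℝ) else 0| =
            (if x = (⟨0, hL⟩ : Fin L) then (1:ℝ) else 0) := by
          intro x
          by_cases hx : (x:ℕ) = 0
          · rw [if_pos hx, if_pos (by simp [Fin.ext_iff, hx])]; simp
          · rw [if_neg hx, if_neg (by simp [Fin.ext_iff]; omega)]; simp
        rw [Finset.sum_congr rfl (fun x _ => this x)]
        simp
    calc ∑ ℓ : Fin L, |reVec L Q γ 1 ℓ| ≤ 1 := h1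
      _ ≤ _ := one_le_pow₀ hB
  | (m+2) => by
    have hB := reVec_absB_nonneg (γ := γ) hpos
    have ih := reVec_abs_sum (L := L) (Q := Q) (γ := γ) hpos (m+1)
    have hshift := shift_abs_sum (reVec L Q γ (m+1))
    set B : ℝ := 1 + ∑ j ∈ Icc 2 (Q-1), ((2:ℝ) ^ (γ j) + 1)/((2:ℝ) ^ (γ j) - 1) with hBdef
    rw [reVec]
    split
    · rename_i hlt
      have hb : (1:ℝ) < (2:ℝ) ^ (γ (m+2)) := one_lt_two_rpow (hpos (m+2) (by omega) hlt)
      set b : ℝ := (2:ℝ) ^ (γ (m+2)) with hbdef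
      have hbne : b - 1 ≠ 0 := by linarith
      have hstep : ∑ ℓ : Fin L, |(fun ℓ => (b - 1)⁻¹ •
            (b • reShift (reVec L Q γ (m+1)) - reVec L Q γ (m+1)) ℓ) ℓ|
          ≤ (b - 1)⁻¹ * (b * (∑ ℓ : Fin L, |reVec L Q γ (m+1) ℓ|)
              + ∑ ℓ : Fin L, |reVec L Q γ (m+1) ℓ|) := by
        have hle : ∀ ℓ : Fin L, |(b - 1)⁻¹ *
            (b * reShift (reVec L Q γ (m+1)) ℓ - reVec L Q γ (m+1) ℓ)|
            ≤ (b - 1)⁻¹ * (b * |reShift (reVec L Q γ (m+1)) ℓ| + |reVec L Q γ (m+1) ℓ|) := by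
          intro ℓ
          rw [abs_mul, abs_of_nonneg (inv_nonneg.mpr (by linarith) : (0:ℝ) ≤ (b-1)⁻¹)]
          refine mul_le_mul_of_nonneg_left ?_ (inv_nonneg.mpr (by linarith))
          calc |b * reShift (reVec L Q γ (m+1)) ℓ - reVec L Q γ (m+1) ℓ|
              ≤ |b * reShift (reVec L Q γ (m+1)) ℓ| + |reVec L Q γ (m+1) ℓ| := abs_sub _ _
            _ = b * |reShift (reVec L Q γ (m+1)) ℓ| + |reVec L Q γ (m+1) ℓ| := by
                rw [abs_mul, abs_of_nonneg (by linarith : (0:ℝ) ≤ b)]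
        calc ∑ ℓ : Fin L, |(b - 1)⁻¹ * (b * reShift (reVec L Q γ (m+1)) ℓ - reVec L Q γ (m+1) ℓ)|
            ≤ ∑ ℓ : Fin L, (b - 1)⁻¹ *
              (b * |reShift (reVec L Q γ (m+1)) ℓ| + |reVec L Q γ (m+1) ℓ|) :=
              Finset.sum_le_sum fun ℓ _ => hle ℓ
          _ = (b - 1)⁻¹ * (b * (∑ ℓ : Fin L, |reShift (reVec L Q γ (m+1)) ℓ|)
              + ∑ ℓ : Fin L, |reVec L Q γ (m+1) ℓ|) := by
              rw [← Finset.mul_sum, Finset.sum_add_distrib, ← Finset.mul_sum]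
          _ ≤ _ := by
              have h2 : (0:ℝ) ≤ ∑ ℓ : Fin L, |reVec L Q γ (m+1) ℓ| :=
                Finset.sum_nonneg fun _ _ => abs_nonneg _
              refine mul_le_mul_of_nonneg_left ?_ (inv_nonneg.mpr (by linarith))
              have := mul_le_mul_of_nonneg_left hshift (by linarith : (0:ℝ) ≤ b)
              linarith
      refine le_trans hstep ?_
      have hT : (b - 1)⁻¹ * (b * (∑ ℓ : Fin L, |reVec L Q γ (m+1) ℓ|)
            + ∑ ℓ : Fin L, |reVec L Q γ (m+1) ℓ|)
          = ((b + 1)/(b - 1)) * ∑ ℓ : Fin L, |reVec L Q γ (m+1) ℓ| := by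
        field_simp
      rw [hT]
      have hfB : (b + 1)/(b - 1) ≤ B := by
        rw [hBdef]
        have hmem : m + 2 ∈ Icc 2 (Q-1) := by rw [Finset.mem_Icc]; omega
        have := Finset.single_le_sum (f := fun j => ((2:ℝ) ^ (γ j) + 1)/((2:ℝ) ^ (γ j) - 1))
          (fun j hj => by
            rw [Finset.mem_Icc] at hj
            have hbj : (1:ℝ) < (2:ℝ) ^ (γ j) := one_lt_two_rpow (hpos j hj.1 (by omega))
            exact div_nonneg (by linarith) (by linarith)) hmem
        rw [hbdef]; linarith
      have hmin1 : min (m+1) Q = m+1 := by omega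
      have hmin2 : min (m+2) Q = m+2 := by omega
      rw [hmin2, pow_succ]
      rw [hmin1] at ih
      have hT0 : (0:ℝ) ≤ ∑ ℓ : Fin L, |reVec L Q γ (m+1) ℓ| :=
        Finset.sum_nonneg fun _ _ => abs_nonneg _
      calc ((b + 1)/(b - 1)) * ∑ ℓ : Fin L, |reVec L Q γ (m+1) ℓ|
          ≤ B * ∑ ℓ : Fin L, |reVec L Q γ (m+1) ℓ| := mul_le_mul_of_nonneg_right hfB hT0
        _ ≤ B * B ^ (m+1) := mul_le_mul_of_nonneg_left ih (by linarith)
        _ = B ^ (m+1) * B := by ring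
    · calc ∑ ℓ : Fin L, |reShift (reVec L Q γ (m+1)) ℓ|
          ≤ ∑ ℓ : Fin L, |reVec L Q γ (m+1) ℓ| := hshift
        _ ≤ B ^ (min (m+1) Q) := ih
        _ ≤ B ^ (min (m+2) Q) := pow_le_pow_right₀ hB (by omega)


lemma norm_toLp_sq {Ω : Type*} [MeasurableSpace Ω] {P : Measure Ω}
    (g : Ω → ℝ) (hg : MemLp g 2 P) :
    ∫ ω, (g ω) ^ 2 ∂P = ‖hg.toLp g‖ ^ 2 := by
  rw [← real_inner_self_eq_norm_sq, MeasureTheory.L2.inner_def]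
  refine integral_congr_ae ?_
  filter_upwards [hg.coeFn_toLp] with ω hω
  rw [hω]
  simp [RCLike.inner_apply]

lemma coeFn_sum_ae {Ω : Type*} [MeasurableSpace Ω] {P : Measure Ω} {ι : Type*}
    (s : Finset ι) (F : ι → Lp ℝ 2 P) :
    ⇑(∑ i ∈ s, F i) =ᵐ[P] fun ω => ∑ i ∈ s, F i ω := by
  classical
  induction s using Finset.induction_on with
  | empty => simp only [Finset.sum_empty]; exact Lp.coeFn_zero ℝ 2 P
  | @insert A S hni ih =>
    rw [Finset.sum_insert hni]
    filter_upwards [Lp.coeFn_add (F A) (∑ i ∈ S, F i), ih] with ω h1 h2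
    rw [h1]
    simp only [Pi.add_apply, h2]
    rw [Finset.sum_insert hni]

lemma l2_tri {Ω : Type*} [MeasurableSpace Ω] (P : Measure Ω) {k : ℕ}
    (a : Fin k → ℝ) (f : Fin k → Ω → ℝ) (hf : ∀ i, MemLp (f i) 2 P) :
    ∫ ω, (∑ i, a i * f i ω) ^ 2 ∂P
      ≤ (∑ i, |a i| * Real.sqrt (∫ ω, (f i ω) ^ 2 ∂P)) ^ 2 := by
  have hsum : MemLp (fun ω => ∑ i, a i * f i ω) 2 P := by
    have := memLp_finset_sum' (μ := P) (p := 2) Finset.univ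
      (f := fun i : Fin k => fun ω => a i * f i ω)
      (fun i _ => ((hf i).const_mul (a i)))
    convert this using 1
    funext ω
    simp
  set G : Lp ℝ 2 P := ∑ i, a i • (hf i).toLp (f i) with hGdef
  have hcoe : ⇑G =ᵐ[P] fun ω => ∑ i, a i * f i ω := by
    have h1 : ⇑G =ᵐ[P] fun ω => ∑ i, (a i • ((hf i).toLp (f i) : Lp ℝ 2 P)) ω :=
      coeFn_sum_ae Finset.univ _
    have h2 : ∀ i : Fin k, ⇑(a i • ((hf i).toLp (f i) : Lp ℝ 2 P)) =ᵐ[P]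
        fun ω => a i * f i ω := by
      intro i
      filter_upwards [Lp.coeFn_smul (a i) ((hf i).toLp (f i)), (hf i).coeFn_toLp] with ω hs ht
      rw [hs]
      simp [ht, smul_eq_mul]
    have h3 : ∀ᵐ ω ∂P, ∀ i : Fin k, (a i • ((hf i).toLp (f i) : Lp ℝ 2 P)) ω = a i * f i ω := by
      rw [MeasureTheory.ae_all_iff]
      exact h2
    filter_upwards [h1, h3] with ω h1ω h3ω
    rw [h1ω]
    exact Finset.sum_congr rfl fun i _ => h3ω i
  have h1 : ∫ ω, (∑ i, a i * f i ω) ^ 2 ∂P = ‖G‖ ^ 2 := by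
    rw [← real_inner_self_eq_norm_sq, MeasureTheory.L2.inner_def]
    refine integral_congr_ae ?_
    filter_upwards [hcoe] with ω hω
    rw [hω]
    simp [RCLike.inner_apply]
  have h2 : ‖G‖ ≤ ∑ i, |a i| * Real.sqrt (∫ ω, (f i ω) ^ 2 ∂P) := by
    calc ‖G‖ ≤ ∑ i, ‖a i • ((hf i).toLp (f i))‖ := norm_sum_le _ _
      _ = ∑ i, |a i| * Real.sqrt (∫ ω, (f i ω) ^ 2 ∂P) := by
          refine Finset.sum_congr rfl fun i _ => ?_
          rw [norm_smul, Real.norm_eq_abs]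
          congr 1
          rw [norm_toLp_sq (f i) (hf i), Real.sqrt_sq (norm_nonneg _)]
  rw [h1]
  have h3 : (0:ℝ) ≤ ‖G‖ := norm_nonneg _
  exact pow_le_pow_left₀ h3 h2 2

end auxx
open Finset MeasureTheory ProbabilityTheory

/-- Variance estimate (RE, M2) of Lemma 3.5: under the pathwise asymptotic expansion
`Z_ℓ = Z + ∑_{j=2}^{q−1} c_j 2^{−ℓγ^j} + O_{L²}(2^{−ℓγ^q})`, the Richardson
extrapolation differences satisfy
`Var(∑_ℓ (v^{k,q}_ℓ − v^{k−1,q}_ℓ) Z_ℓ) ≤ c'·2^{−2kγ^q}` for all `k ≥ 1`. -/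
theorem stmt_8 {Ω : Type*} [MeasurableSpace Ω] (P : Measure Ω) [IsProbabilityMeasure P]
    (q : ℕ) (hq : 1 ≤ q) (γ : ℕ → ℝ) (hγ1 : γ 1 = 0)
    (hmono : ∀ j, 1 ≤ j → j < q → γ j < γ (j + 1))
    (Z : Ω → ℝ) (Zs : ℕ → Ω → ℝ) (cf : ℕ → Ω → ℝ)
    (hZ : MemLp Z 2 P) (hZs : ∀ ℓ, MemLp (Zs ℓ) 2 P)
    (hcf : ∀ j, MemLp (cf j) 2 P)
    (c : ℝ) (hc : 0 < c) (ℓ₀ : ℕ)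
    (hexp : ∀ ℓ : ℕ, ℓ₀ ≤ ℓ →
      ∫ ω, (Zs ℓ ω - Z ω -
          ∑ j ∈ Finset.Icc 2 (q - 1), cf j ω * (2 : ℝ) ^ (-(ℓ : ℝ) * γ j)) ^ 2 ∂P
        ≤ c * (2 : ℝ) ^ (-2 * (ℓ : ℝ) * γ q)) :
    ∃ c' > 0, ∀ k : ℕ, 1 ≤ k →
      variance
          (fun ω => ∑ ℓ : Fin k,
            (reVec k q γ k ℓ - reVec k q γ (k - 1) ℓ) * Zs ((ℓ : ℕ) + 1) ω) P
        ≤ c' * (2 : ℝ) ^ (-2 * (k : ℝ) * γ q) := by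
  
  classical
  -- monotonicity consequences for γ
  have gmono : ∀ i, 1 ≤ i → ∀ j, i ≤ j → j ≤ q → γ i ≤ γ j := by
    intro i h1 j hij
    induction j, hij using Nat.le_induction with
    | base => intro _; exact le_refl _
    | succ n hn ih =>
      intro hnq
      have h := hmono n (by omega) (by omega)
      have := ih (by omega)
      linarith
  have hpos : ∀ j, 2 ≤ j → j < q → 0 < γ j := by
    intro j h2 hlt
    have h21 : γ 1 < γ 2 := hmono 1 le_rfl (by omega)
    have h2j : γ 2 ≤ γ j := gmono 2 (by omega) j h2 (by omega)
    rw [hγ1] at h21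
    linarith
  have hγq : 0 ≤ γ q := by
    rcases Nat.lt_or_ge q 2 with hq2 | hq2
    · have : q = 1 := by omega
      rw [this, hγ1]
    · have h21 : γ 1 < γ 2 := hmono 1 le_rfl (by omega)
      have h2q : γ 2 ≤ γ q := gmono 2 (by omega) q hq2 le_rfl
      rw [hγ1] at h21
      linarith
  set r : ℕ := max (q - 1) 1 with hrdef
  have hr1 : 1 ≤ r := le_max_right _ _
  set B : ℝ := 1 + ∑ j ∈ Icc 2 (q - 1), ((2:ℝ) ^ (γ j) + 1)/((2:ℝ) ^ (γ j) - 1) with hBdef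
  have hB1 : (1:ℝ) ≤ B := reVec_absB_nonneg hpos
  set M : ℝ := B ^ q with hMdef
  have hM1 : (1:ℝ) ≤ M := one_le_pow₀ hB1
  set R : ℕ → Ω → ℝ := fun ℓ ω => Zs ℓ ω - Z ω -
      ∑ j ∈ Finset.Icc 2 (q - 1), cf j ω * (2:ℝ) ^ (-(ℓ:ℝ) * γ j) with hRdef
  have hR : ∀ ℓ, MemLp (R ℓ) 2 P := by
    intro ℓ
    refine ((hZs ℓ).sub hZ).sub ?_
    have h1 : MemLp (∑ j ∈ Finset.Icc 2 (q-1),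
        fun ω => cf j ω * (2:ℝ) ^ (-(ℓ:ℝ) * γ j)) 2 P := by
      refine memLp_finset_sum' _ fun j _ => ?_
      have := (hcf j).const_mul ((2:ℝ) ^ (-(ℓ:ℝ) * γ j))
      convert this using 1
      funext ω
      ring
    convert h1 using 1
    funext ω
    simp
  set K₀ : ℕ := q + r + ℓ₀ + 2 with hK₀def
  set csmall : ℝ := ∑ n ∈ Finset.range K₀,
      variance (fun ω => ∑ ℓ : Fin n,
        (reVec n q γ n ℓ - reVec n q γ (n - 1) ℓ) * Zs ((ℓ : ℕ) + 1) ω) P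
        * (2:ℝ) ^ (2 * (n:ℝ) * γ q) with hcsdef
  have hcs0 : 0 ≤ csmall := by
    refine Finset.sum_nonneg fun n _ => ?_
    exact mul_nonneg (variance_nonneg _ _) (two_rpow_pos _).le
  set cbig : ℝ := 4 * M ^ 2 * c * (2:ℝ) ^ (2 * (r:ℝ) * γ q) with hcbdef
  have hcb0 : 0 < cbig := by
    have := two_rpow_pos (2 * (r:ℝ) * γ q)
    have hM0 : (0:ℝ) < M := by linarith
    positivity
  refine ⟨csmall + cbig + 1, by linarith, ?_⟩
  intro k hk
  rcases Nat.lt_or_ge k K₀ with hsmall | hbig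
  · -- small k : absorb into csmall
    have hterm : variance (fun ω => ∑ ℓ : Fin k,
        (reVec k q γ k ℓ - reVec k q γ (k - 1) ℓ) * Zs ((ℓ : ℕ) + 1) ω) P
          * (2:ℝ) ^ (2 * (k:ℝ) * γ q) ≤ csmall := by
      rw [hcsdef]
      exact Finset.single_le_sum
        (f := fun n => variance (fun ω => ∑ ℓ : Fin n,
          (reVec n q γ n ℓ - reVec n q γ (n - 1) ℓ) * Zs ((ℓ : ℕ) + 1) ω) P
          * (2:ℝ) ^ (2 * (n:ℝ) * γ q))
        (fun n _ => mul_nonneg (variance_nonneg _ _) (two_rpow_pos _).le)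
        (Finset.mem_range.mpr hsmall)
    have hcancel : (2:ℝ) ^ (2 * (k:ℝ) * γ q) * (2:ℝ) ^ (-2 * (k:ℝ) * γ q) = 1 := by
      rw [← Real.rpow_add two_pos]
      norm_num
    calc variance (fun ω => ∑ ℓ : Fin k,
          (reVec k q γ k ℓ - reVec k q γ (k - 1) ℓ) * Zs ((ℓ : ℕ) + 1) ω) P
        = (variance (fun ω => ∑ ℓ : Fin k,
            (reVec k q γ k ℓ - reVec k q γ (k - 1) ℓ) * Zs ((ℓ : ℕ) + 1) ω) P
            * (2:ℝ) ^ (2 * (k:ℝ) * γ q)) * (2:ℝ) ^ (-2 * (k:ℝ) * γ q) := by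
          rw [mul_assoc, hcancel, mul_one]
      _ ≤ csmall * (2:ℝ) ^ (-2 * (k:ℝ) * γ q) :=
          mul_le_mul_of_nonneg_right hterm (two_rpow_pos _).le
      _ ≤ (csmall + cbig + 1) * (2:ℝ) ^ (-2 * (k:ℝ) * γ q) :=
          mul_le_mul_of_nonneg_right (by linarith) (two_rpow_pos _).le
  · -- large k : genuine Richardson estimate
    have hkq : q ≤ k := by omega
    have hk2 : 2 ≤ k := by omega
    -- the weights
    have hzero : ∑ ℓ : Fin k, (reVec k q γ k ℓ - reVec k q γ (k - 1) ℓ) = 0 := by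
      rw [Finset.sum_sub_distrib, reVec_sum_one hpos k (by omega) le_rfl,
        reVec_sum_one hpos (k-1) (by omega) (by omega)]
      ring
    have hkill : ∀ j ∈ Finset.Icc 2 (q-1),
        ∑ ℓ : Fin k, (reVec k q γ k ℓ - reVec k q γ (k - 1) ℓ)
          * (2:ℝ) ^ (-(((ℓ:ℕ):ℝ) + 1) * γ j) = 0 := by
      intro j hj
      rw [Finset.mem_Icc] at hj
      simp only [sub_mul]
      rw [Finset.sum_sub_distrib,
        reVec_kill hpos j hj.1 (by omega) k le_rfl (by omega),
        reVec_kill hpos j hj.1 (by omega) (k-1) (by omega) (by omega)]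
      ring
    -- the Z and cf terms cancel exactly
    have key : (fun ω => ∑ ℓ : Fin k,
          (reVec k q γ k ℓ - reVec k q γ (k - 1) ℓ) * Zs ((ℓ : ℕ) + 1) ω)
        = fun ω => ∑ ℓ : Fin k,
          (reVec k q γ k ℓ - reVec k q γ (k - 1) ℓ) * R ((ℓ : ℕ) + 1) ω := by
      funext ω
      have e1 : ∑ ℓ : Fin k, (reVec k q γ k ℓ - reVec k q γ (k - 1) ℓ) * Zs ((ℓ : ℕ) + 1) ω
          = ∑ ℓ : Fin k, ((reVec k q γ k ℓ - reVec k q γ (k - 1) ℓ) * R ((ℓ : ℕ) + 1) ω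
              + (reVec k q γ k ℓ - reVec k q γ (k - 1) ℓ) * Z ω
              + ∑ j ∈ Finset.Icc 2 (q-1), cf j ω *
                  ((reVec k q γ k ℓ - reVec k q γ (k - 1) ℓ)
                    * (2:ℝ) ^ (-(((ℓ:ℕ):ℝ) + 1) * γ j))) := by
        refine Finset.sum_congr rfl fun ℓ _ => ?_
        have hZsplit : Zs ((ℓ:ℕ) + 1) ω = R ((ℓ:ℕ) + 1) ω + Z ω
            + ∑ j ∈ Finset.Icc 2 (q-1), cf j ω * (2:ℝ) ^ (-(((ℓ:ℕ):ℝ) + 1) * γ j) := by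
          rw [hRdef]
          simp only []
          push_cast
          ring
        rw [hZsplit, mul_add, mul_add, Finset.mul_sum]
        congr 1
        exact Finset.sum_congr rfl fun j _ => by ring
      rw [e1, Finset.sum_add_distrib, Finset.sum_add_distrib, ← Finset.sum_mul, hzero, zero_mul,
        add_zero, Finset.sum_comm]
      have e2 : ∀ j ∈ Finset.Icc 2 (q-1), ∑ ℓ : Fin k, cf j ω *
          ((reVec k q γ k ℓ - reVec k q γ (k - 1) ℓ)
            * (2:ℝ) ^ (-(((ℓ:ℕ):ℝ) + 1) * γ j)) = 0 := by
        intro j hj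
        rw [← Finset.mul_sum, hkill j hj, mul_zero]
      rw [Finset.sum_congr rfl e2]
      simp
    rw [key]
    -- variance ≤ second moment
    have hmem : MemLp (fun ω => ∑ ℓ : Fin k,
        (reVec k q γ k ℓ - reVec k q γ (k - 1) ℓ) * R ((ℓ : ℕ) + 1) ω) 2 P := by
      have h1 : MemLp (∑ ℓ : Fin k, fun ω =>
          (reVec k q γ k ℓ - reVec k q γ (k - 1) ℓ) * R ((ℓ : ℕ) + 1) ω) 2 P :=
        memLp_finset_sum' _ fun ℓ _ => (hR ((ℓ:ℕ)+1)).const_mul _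
      convert h1 using 1
      funext ω
      simp
    have hvar : variance (fun ω => ∑ ℓ : Fin k,
          (reVec k q γ k ℓ - reVec k q γ (k - 1) ℓ) * R ((ℓ : ℕ) + 1) ω) P
        ≤ ∫ ω, (∑ ℓ : Fin k,
          (reVec k q γ k ℓ - reVec k q γ (k - 1) ℓ) * R ((ℓ : ℕ) + 1) ω) ^ 2 ∂P := by
      have := variance_le_expectation_sq (μ := P) hmem.aestronglyMeasurable
      simpa using this
    have htri := l2_tri P (fun ℓ : Fin k => reVec k q γ k ℓ - reVec k q γ (k - 1) ℓ)
      (fun ℓ : Fin k => R ((ℓ:ℕ) + 1)) (fun ℓ => hR _)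
    -- bound each term
    have hsqrt : ∀ ℓ : Fin k, |reVec k q γ k ℓ - reVec k q γ (k - 1) ℓ|
          * Real.sqrt (∫ ω, (R ((ℓ:ℕ) + 1) ω) ^ 2 ∂P)
        ≤ |reVec k q γ k ℓ - reVec k q γ (k - 1) ℓ|
          * (Real.sqrt c * (2:ℝ) ^ (((r:ℝ) - (k:ℝ)) * γ q)) := by
      intro ℓ
      by_cases hw : reVec k q γ k ℓ - reVec k q γ (k - 1) ℓ = 0
      · rw [hw]
        simp
      · refine mul_le_mul_of_nonneg_left ?_ (abs_nonneg _)
        have hsupp : k ≤ (ℓ:ℕ) + 1 + r := by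
          by_contra hcon
          push_neg at hcon
          apply hw
          have h1 : reVec k q γ k ℓ = 0 := reVec_lower k ℓ (by omega)
          have h2 : reVec k q γ (k-1) ℓ = 0 := reVec_lower (k-1) ℓ (by omega)
          rw [h1, h2, sub_zero]
        have hl0 : ℓ₀ ≤ (ℓ:ℕ) + 1 := by omega
        have hbound := hexp ((ℓ:ℕ) + 1) hl0
        have hs1 : Real.sqrt (∫ ω, (R ((ℓ:ℕ) + 1) ω) ^ 2 ∂P)
            ≤ Real.sqrt (c * (2:ℝ) ^ (-2 * (((ℓ:ℕ):ℝ) + 1) * γ q)) := by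
          apply Real.sqrt_le_sqrt
          have hcast : (((((ℓ:ℕ) + 1 : ℕ)):ℝ)) = ((ℓ:ℕ):ℝ) + 1 := by push_cast; ring
          rw [← hcast]
          exact hbound
        have hs2 : Real.sqrt (c * (2:ℝ) ^ (-2 * (((ℓ:ℕ):ℝ) + 1) * γ q))
            = Real.sqrt c * (2:ℝ) ^ (-(((ℓ:ℕ):ℝ) + 1) * γ q) := by
          rw [Real.sqrt_mul hc.le]
          congr 1
          rw [show (-2 * (((ℓ:ℕ):ℝ) + 1) * γ q) = (-(((ℓ:ℕ):ℝ) + 1) * γ q) * ((2:ℕ):ℝ) by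
            push_cast; ring]
          rw [Real.rpow_mul (by norm_num : (0:ℝ) ≤ 2), Real.rpow_natCast]
          exact Real.sqrt_sq (two_rpow_pos _).le
        have hs3 : (2:ℝ) ^ (-(((ℓ:ℕ):ℝ) + 1) * γ q) ≤ (2:ℝ) ^ (((r:ℝ) - (k:ℝ)) * γ q) := by
          apply Real.rpow_le_rpow_of_exponent_le one_le_two
          have hcast : (k:ℝ) ≤ ((ℓ:ℕ):ℝ) + 1 + (r:ℝ) := by exact_mod_cast hsupp
          have hnn : (0:ℝ) ≤ ((r:ℝ) - (k:ℝ) + (((ℓ:ℕ):ℝ) + 1)) * γ q :=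
            mul_nonneg (by linarith) hγq
          nlinarith [hnn]
        calc Real.sqrt (∫ ω, (R ((ℓ:ℕ) + 1) ω) ^ 2 ∂P)
            ≤ Real.sqrt c * (2:ℝ) ^ (-(((ℓ:ℕ):ℝ) + 1) * γ q) := by rw [← hs2]; exact hs1
          _ ≤ Real.sqrt c * (2:ℝ) ^ (((r:ℝ) - (k:ℝ)) * γ q) :=
              mul_le_mul_of_nonneg_left hs3 (Real.sqrt_nonneg _)
    -- ∑ |w| ≤ 2 M
    have habs : ∑ ℓ : Fin k, |reVec k q γ k ℓ - reVec k q γ (k - 1) ℓ| ≤ 2 * M := by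
      calc ∑ ℓ : Fin k, |reVec k q γ k ℓ - reVec k q γ (k - 1) ℓ|
          ≤ ∑ ℓ : Fin k, (|reVec k q γ k ℓ| + |reVec k q γ (k - 1) ℓ|) :=
            Finset.sum_le_sum fun ℓ _ => abs_sub _ _
        _ = (∑ ℓ : Fin k, |reVec k q γ k ℓ|) + ∑ ℓ : Fin k, |reVec k q γ (k - 1) ℓ| :=
            Finset.sum_add_distrib
        _ ≤ B ^ (min k q) + B ^ (min (k-1) q) :=
            add_le_add (reVec_abs_sum hpos k) (reVec_abs_sum hpos (k-1))
        _ ≤ M + M := by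
            rw [hMdef]
            exact add_le_add (pow_le_pow_right₀ hB1 (min_le_right _ _))
              (pow_le_pow_right₀ hB1 (min_le_right _ _))
        _ = 2 * M := by ring
    have hsumnn : (0:ℝ) ≤ ∑ ℓ : Fin k, |reVec k q γ k ℓ - reVec k q γ (k - 1) ℓ|
          * Real.sqrt (∫ ω, (R ((ℓ:ℕ) + 1) ω) ^ 2 ∂P) :=
      Finset.sum_nonneg fun ℓ _ => mul_nonneg (abs_nonneg _) (Real.sqrt_nonneg _)
    calc variance (fun ω => ∑ ℓ : Fin k,
          (reVec k q γ k ℓ - reVec k q γ (k - 1) ℓ) * R ((ℓ : ℕ) + 1) ω) P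
        ≤ ∫ ω, (∑ ℓ : Fin k,
            (reVec k q γ k ℓ - reVec k q γ (k - 1) ℓ) * R ((ℓ : ℕ) + 1) ω) ^ 2 ∂P := hvar
      _ ≤ (∑ ℓ : Fin k, |reVec k q γ k ℓ - reVec k q γ (k - 1) ℓ|
            * Real.sqrt (∫ ω, (R ((ℓ:ℕ) + 1) ω) ^ 2 ∂P)) ^ 2 := htri
      _ ≤ (∑ ℓ : Fin k, |reVec k q γ k ℓ - reVec k q γ (k - 1) ℓ|
            * (Real.sqrt c * (2:ℝ) ^ (((r:ℝ) - (k:ℝ)) * γ q))) ^ 2 := by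
          apply pow_le_pow_left₀ hsumnn
          exact Finset.sum_le_sum fun ℓ _ => hsqrt ℓ
      _ = (∑ ℓ : Fin k, |reVec k q γ k ℓ - reVec k q γ (k - 1) ℓ|) ^ 2
            * (c * (2:ℝ) ^ (2 * ((r:ℝ) - (k:ℝ)) * γ q)) := by
          rw [← Finset.sum_mul, mul_pow, mul_pow, Real.sq_sqrt hc.le]
          congr 1
          congr 1
          rw [← Real.rpow_natCast ((2:ℝ) ^ (((r:ℝ) - (k:ℝ)) * γ q)) 2,
            ← Real.rpow_mul (by norm_num : (0:ℝ) ≤ 2)]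
          congr 1
          push_cast
          ring
      _ ≤ (2 * M) ^ 2 * (c * (2:ℝ) ^ (2 * ((r:ℝ) - (k:ℝ)) * γ q)) := by
          refine mul_le_mul_of_nonneg_right ?_
            (mul_nonneg hc.le (two_rpow_pos _).le)
          exact pow_le_pow_left₀
            (Finset.sum_nonneg fun ℓ _ => abs_nonneg _) habs 2
      _ = cbig * (2:ℝ) ^ (-2 * (k:ℝ) * γ q) := by
          rw [hcbdef]
          rw [show 2 * ((r:ℝ) - (k:ℝ)) * γ q = 2 * (r:ℝ) * γ q + -2 * (k:ℝ) * γ q by ring,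
            Real.rpow_add two_pos]
          ring
      _ ≤ (csmall + cbig + 1) * (2:ℝ) ^ (-2 * (k:ℝ) * γ q) :=
          mul_le_mul_of_nonneg_right (by linarith) (two_rpow_pos _).le
end

section
/- Suppose for all k ≤ L and all L ∈ ℕ: α^L = Σ_{k=1}^L β^k with β^k supported on S^k, |(α^L)ᵀμ − E[Z]| ≤ c·2^{−Lγ_B}, (β^k)ᵀCβ^k ≤ c·2^{−kγ_V}, and W_k ≤ c·2^{kγ_C} with γ_C < γ_V. Then for every ε > 0 small enough there exist L and sample numbers m_1,…,m_L ∈ ℕ such that the linear unbiased estimator μ̂ = Σ_{k=1}^L Σ_{ℓ∈S^k} β^k_ℓ (1/m_k) Σ_{i=1}^{m_k} Z_ℓ(ω^k_i) achieves E[(μ̂ − E[Z])²] ≤ ε² with Cost(μ̂) = Σ_k m_k W_k ≤ c'(ε^{−γ_C/γ_B} + ε^{−2}). -/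
open Finset MeasureTheory ProbabilityTheory

private lemma geom_range_le' {r : ℝ} (h0 : 0 ≤ r) (h1 : r < 1) (L : ℕ) :
    ∑ i ∈ Finset.range L, r ^ i ≤ 1/(1-r) := by
  have h1r : (0:ℝ) < 1 - r := by linarith
  rw [geom_sum_eq (ne_of_lt h1) L]
  have heq : (r^L-1)/(r-1) = (1-r^L)/(1-r) := by
    rw [← neg_div_neg_eq]; ring_nf
  rw [heq, div_le_div_iff₀ h1r h1r]
  have : r ^ L ≥ 0 := pow_nonneg h0 L
  nlinarith

private lemma geom_Icc_le_of_lt_one' {r : ℝ} (h0 : 0 < r) (h1 : r < 1) (L : ℕ) :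
    ∑ k ∈ Finset.Icc 1 L, r ^ k ≤ r / (1 - r) := by
  rw [← Finset.Ico_add_one_right_eq_Icc, Finset.sum_Ico_eq_sum_range]
  have hL : L + 1 - 1 = L := by omega
  rw [hL]
  calc ∑ i ∈ Finset.range L, r ^ (1 + i) = r * ∑ i ∈ Finset.range L, r ^ i := by
        rw [Finset.mul_sum]; exact Finset.sum_congr rfl fun i _ => by rw [pow_add, pow_one]
    _ ≤ r * (1/(1-r)) := mul_le_mul_of_nonneg_left (geom_range_le' h0.le h1 L) h0.le
    _ = r / (1-r) := by ring

private lemma geom_Icc_le_of_one_lt' {q : ℝ} (h1 : 1 < q) (L : ℕ) :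
    ∑ k ∈ Finset.Icc 1 L, q ^ k ≤ q * q ^ L / (q - 1) := by
  have hq1 : (0:ℝ) < q - 1 := by linarith
  rw [← Finset.Ico_add_one_right_eq_Icc, Finset.sum_Ico_eq_sum_range]
  have hL : L + 1 - 1 = L := by omega
  rw [hL]
  calc ∑ i ∈ Finset.range L, q ^ (1 + i) = q * ((q^L - 1)/(q-1)) := by
        rw [← geom_sum_eq (by intro h; rw [h] at h1; exact lt_irrefl 1 h1 : q ≠ 1) L,
          Finset.mul_sum]
        exact Finset.sum_congr rfl fun i _ => by rw [pow_add, pow_one]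
    _ ≤ q * (q^L/(q-1)) := by gcongr; linarith
    _ = q * q ^ L / (q-1) := by ring

/-- Theorem 2.3, case `γ_C < γ_V`: under the bias assumption (M1) on the linear
combination `α^L`, the group-variance decay (M2) for the coefficients `β^k`
(with `(β^k)ᵀCβ^k = Var(∑_{ℓ∈S^k} β^k_ℓ Z_ℓ)`), and the group-cost growth (M3),
for every small `ε > 0` there are a level `L` and sample numbers `m_k ≥ 1` such that
the linear unbiased estimator (whose MSE, by independence of the sample groups, equals
the squared bias plus `∑_k Var(∑_{ℓ∈S^k} β^k_ℓ Z_ℓ)/m_k`) achieves MSE `≤ ε²` with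
cost `∑_k m_k W_k ≤ c'(ε^{−γ_C/γ_B} + ε^{−2})`. -/
theorem stmt_13 {Ω : Type*} [MeasurableSpace Ω] (P : Measure Ω) [IsProbabilityMeasure P]
    (Z : Ω → ℝ) (Zs : ℕ → Ω → ℝ) (hZ : Integrable Z P) (hZs : ∀ ℓ, MemLp (Zs ℓ) 2 P)
    (S : ℕ → ℕ → Finset ℕ) (β : ℕ → ℕ → ℕ → ℝ) (αv : ℕ → ℕ → ℝ) (W : ℕ → ℕ → ℝ)
    (c γB γV γC : ℝ) (hc : 0 < c) (hγB : 0 < γB) (hγV : 0 < γV) (hγC : 0 < γC)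
    (hCV : γC < γV) (hWpos : ∀ L k, 0 < W L k)
    (hM0 : ∀ L ℓ, αv L ℓ = ∑ k ∈ Finset.Icc 1 L, β L k ℓ)
    (hM0' : ∀ L k ℓ, ℓ ∉ S L k → β L k ℓ = 0)
    (hM1 : ∀ L : ℕ, 1 ≤ L →
      |(∑ ℓ ∈ Finset.Icc 1 L, αv L ℓ * ∫ ω, Zs ℓ ω ∂P) - ∫ ω, Z ω ∂P|
        ≤ c * (2 : ℝ) ^ (-(L : ℝ) * γB))
    (hM2 : ∀ L k : ℕ, 1 ≤ k → k ≤ L →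
      variance (fun ω => ∑ ℓ ∈ S L k, β L k ℓ * Zs ℓ ω) P
        ≤ c * (2 : ℝ) ^ (-(k : ℝ) * γV))
    (hM3 : ∀ L k : ℕ, 1 ≤ k → k ≤ L → W L k ≤ c * (2 : ℝ) ^ ((k : ℝ) * γC)) :
    ∃ c' > 0, ∃ ε₀ > 0, ∀ ε : ℝ, 0 < ε → ε ≤ ε₀ →
      ∃ (L : ℕ) (m : ℕ → ℕ), 1 ≤ L ∧ (∀ k ∈ Finset.Icc 1 L, 1 ≤ m k) ∧
        ((∑ ℓ ∈ Finset.Icc 1 L, αv L ℓ * ∫ ω, Zs ℓ ω ∂P) - ∫ ω, Z ω ∂P) ^ 2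
            + ∑ k ∈ Finset.Icc 1 L,
                variance (fun ω => ∑ ℓ ∈ S L k, β L k ℓ * Zs ℓ ω) P / (m k : ℝ)
          ≤ ε ^ 2 ∧
        ∑ k ∈ Finset.Icc 1 L, (m k : ℝ) * W L k
          ≤ c' * (ε ^ (-γC / γB) + ε ^ (-2 : ℝ)) := by
  have h2 : (1:ℝ) < 2 := one_lt_two
  have h2pow : ∀ (u : ℝ) (k : ℕ), (2:ℝ) ^ ((k:ℝ) * u) = ((2:ℝ) ^ u) ^ k := fun u k => by
    rw [mul_comm, Real.rpow_mul (by norm_num : (0:ℝ) ≤ 2), Real.rpow_natCast]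
  set δ : ℝ := (γV - γC)/2 with hδdef
  have hδ : 0 < δ := by rw [hδdef]; linarith
  set θ : ℝ := (γV + γC)/2 with hθdef
  set r : ℝ := (2:ℝ) ^ (-δ) with hrdef
  have hr0 : 0 < r := Real.rpow_pos_of_pos two_pos _
  have hr1 : r < 1 := Real.rpow_lt_one_of_one_lt_of_neg h2 (by linarith)
  set rθ : ℝ := (2:ℝ) ^ (-θ) with hrθdef
  have hrθ0 : 0 < rθ := Real.rpow_pos_of_pos two_pos _
  set q : ℝ := (2:ℝ) ^ γC with hqdef
  have hq1 : (1:ℝ) < q := by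
    rw [hqdef]; exact Real.one_lt_rpow_iff_of_pos two_pos |>.mpr (Or.inl ⟨h2, hγC⟩)
  have hq0 : (0:ℝ) < q := lt_trans one_pos hq1
  have hrθr : rθ * r = (2:ℝ) ^ (-γV) := by
    rw [hrθdef, hrdef, ← Real.rpow_add two_pos]
    congr 1; rw [hθdef, hδdef]; ring
  have hrθq : rθ * q = r := by
    rw [hrθdef, hqdef, hrdef, ← Real.rpow_add two_pos]
    congr 1; rw [hθdef, hδdef]; ring
  set Sr : ℝ := r / (1 - r) with hSrdef
  have hSr : 0 < Sr := div_pos hr0 (by linarith)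
  set K : ℝ := 2 * c * Sr with hKdef
  have hK : 0 < K := by positivity
  set p : ℝ := γC / γB with hpdef
  have hp : 0 < p := div_pos hγC hγB
  set a : ℝ := c * Real.sqrt 2 with hadef
  have ha : 0 < a := mul_pos hc (Real.sqrt_pos.mpr two_pos)
  set A : ℝ := K * c * Sr with hAdef
  set B : ℝ := c * (q * q / (q - 1)) * a ^ p with hBdef
  have hApos : 0 < A := by positivity
  have hBpos : 0 < B := by
    have : (0:ℝ) < q - 1 := by linarith
    positivity
  refine ⟨max A B, lt_max_of_lt_left hApos, a / (2:ℝ)^γB, by positivity,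
    fun ε hε hεle => ?_⟩
  set x : ℝ := Real.logb 2 (a / ε) with hxdef
  have haε : (2:ℝ)^γB ≤ a / ε := by
    rw [le_div_iff₀ hε]
    calc (2:ℝ)^γB * ε ≤ (2:ℝ)^γB * (a / (2:ℝ)^γB) :=
          mul_le_mul_of_nonneg_left hεle (by positivity)
      _ = a := by field_simp
  have hxγB : γB ≤ x := (Real.le_logb_iff_rpow_le h2 (by positivity)).mpr haε
  have hx0 : 0 < x := lt_of_lt_of_le hγB hxγB
  set L : ℕ := ⌈x / γB⌉₊ with hLdef
  have hL1 : 1 ≤ L := Nat.one_le_ceil_iff.mpr (by positivity)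
  have hLge : x / γB ≤ (L:ℝ) := Nat.le_ceil _
  have hLle : (L:ℝ) ≤ x / γB + 1 := (Nat.ceil_lt_add_one (by positivity)).le
  have hE : (0:ℝ) < ε ^ (-2:ℝ) := Real.rpow_pos_of_pos hε _
  set m : ℕ → ℕ := fun k => ⌈K * ε ^ (-2:ℝ) * rθ ^ k⌉₊ with hmdef
  have ht : ∀ k : ℕ, (0:ℝ) < K * ε ^ (-2:ℝ) * rθ ^ k := fun k => by positivity
  have hm1 : ∀ k, 1 ≤ m k := fun k => Nat.one_le_ceil_iff.mpr (ht k)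
  have hmge : ∀ k : ℕ, K * ε ^ (-2:ℝ) * rθ ^ k ≤ (m k : ℝ) := fun k => Nat.le_ceil _
  have hmle : ∀ k : ℕ, (m k : ℝ) ≤ K * ε ^ (-2:ℝ) * rθ ^ k + 1 :=
    fun k => (Nat.ceil_lt_add_one (ht k).le).le
  have hεE : ε ^ 2 * ε ^ (-2:ℝ) = 1 := by
    rw [show (ε:ℝ)^2 = ε ^ (2:ℝ) by rw [← Real.rpow_natCast ε 2]; norm_num,
      ← Real.rpow_add hε]
    norm_num
  refine ⟨L, m, hL1, fun k _ => hm1 k, ?_, ?_⟩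
  · -- MSE bound
    have hbias : |(∑ ℓ ∈ Finset.Icc 1 L, αv L ℓ * ∫ ω, Zs ℓ ω ∂P) - ∫ ω, Z ω ∂P|
        ≤ ε / Real.sqrt 2 := by
      refine (hM1 L hL1).trans ?_
      have hxL : x ≤ (L:ℝ) * γB := by
        rw [div_le_iff₀ hγB] at hLge; linarith
      have h2' : (2:ℝ) ^ (-(L:ℝ) * γB) ≤ (2:ℝ) ^ (-x) :=
        Real.rpow_le_rpow_of_exponent_le one_le_two (by linarith)
      have h3 : (2:ℝ) ^ (-x) = ε / a := by
        rw [Real.rpow_neg (by norm_num : (0:ℝ) ≤ 2), hxdef,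
          Real.rpow_logb two_pos (by norm_num) (by positivity), inv_div]
      calc c * (2:ℝ)^(-(L:ℝ)*γB) ≤ c * (ε / a) := by
            rw [← h3]; exact mul_le_mul_of_nonneg_left h2' hc.le
        _ = ε / Real.sqrt 2 := by
            rw [hadef]; field_simp
    have hbias2 : ((∑ ℓ ∈ Finset.Icc 1 L, αv L ℓ * ∫ ω, Zs ℓ ω ∂P) - ∫ ω, Z ω ∂P) ^ 2
        ≤ ε ^ 2 / 2 := by
      have h1 := pow_le_pow_left₀ (abs_nonneg _) hbias 2
      rw [sq_abs] at h1
      refine h1.trans_eq ?_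
      rw [div_pow, Real.sq_sqrt (by norm_num : (0:ℝ) ≤ 2)]
    have hvar : ∀ k ∈ Finset.Icc 1 L,
        variance (fun ω => ∑ ℓ ∈ S L k, β L k ℓ * Zs ℓ ω) P / (m k : ℝ)
          ≤ (c / K) * ε ^ 2 * r ^ k := by
      intro k hk
      obtain ⟨hk1, hkL⟩ := Finset.mem_Icc.mp hk
      have hmpos : (0:ℝ) < (m k : ℝ) := by exact_mod_cast hm1 k
      rw [div_le_iff₀ hmpos]
      have e1 : (2:ℝ)^(-(k:ℝ)*γV) = ((2:ℝ)^(-γV))^k := by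
        rw [show -(k:ℝ)*γV = (k:ℝ)*(-γV) by ring, h2pow]
      calc variance (fun ω => ∑ ℓ ∈ S L k, β L k ℓ * Zs ℓ ω) P
          ≤ c * (2:ℝ)^(-(k:ℝ)*γV) := hM2 L k hk1 hkL
        _ = (c/K) * ε^2 * r^k * (K * ε^(-2:ℝ) * rθ^k) := by
            rw [e1, ← hrθr, mul_pow]
            rw [show (c/K) * ε^2 * r^k * (K * ε^(-2:ℝ) * rθ^k)
                = (c/K*K) * (ε^2 * ε^(-2:ℝ)) * (rθ^k * r^k) by ring,
              hεE, div_mul_cancel₀ c (ne_of_gt hK)]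
            ring
        _ ≤ (c/K) * ε^2 * r^k * (m k : ℝ) := by
            apply mul_le_mul_of_nonneg_left (hmge k) (by positivity)
    have hvarsum : ∑ k ∈ Finset.Icc 1 L,
        variance (fun ω => ∑ ℓ ∈ S L k, β L k ℓ * Zs ℓ ω) P / (m k : ℝ) ≤ ε ^ 2 / 2 := by
      calc ∑ k ∈ Finset.Icc 1 L,
            variance (fun ω => ∑ ℓ ∈ S L k, β L k ℓ * Zs ℓ ω) P / (m k : ℝ)
          ≤ ∑ k ∈ Finset.Icc 1 L, (c/K) * ε^2 * r^k := Finset.sum_le_sum hvar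
        _ = (c/K) * ε^2 * ∑ k ∈ Finset.Icc 1 L, r^k := by rw [Finset.mul_sum]
        _ ≤ (c/K) * ε^2 * Sr := by
            apply mul_le_mul_of_nonneg_left
              ((geom_Icc_le_of_lt_one' hr0 hr1 L).trans_eq hSrdef.symm) (by positivity)
        _ = ε^2/2 := by
            rw [hKdef]; field_simp
    linarith
  · -- Cost bound
    have hcost1 : ∀ k ∈ Finset.Icc 1 L,
        (m k : ℝ) * W L k ≤ K*c*ε^(-2:ℝ)*r^k + c*q^k := by
      intro k hk
      obtain ⟨hk1, hkL⟩ := Finset.mem_Icc.mp hk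
      calc (m k : ℝ) * W L k ≤ (K*ε^(-2:ℝ)*rθ^k + 1) * (c * q^k) := by
            apply mul_le_mul (hmle k) ?_ (hWpos L k).le (by positivity)
            rw [← h2pow γC k]; exact hM3 L k hk1 hkL
        _ = K*c*ε^(-2:ℝ)*(rθ^k*q^k) + c*q^k := by ring
        _ = K*c*ε^(-2:ℝ)*r^k + c*q^k := by rw [← mul_pow, hrθq]
    have hqL : q ^ L ≤ q * a ^ p * ε ^ (-p) := by
      have e3 : (q:ℝ)^L = (2:ℝ)^((L:ℝ)*γC) := by rw [h2pow γC L]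
      rw [e3]
      have hexp : (L:ℝ)*γC ≤ (x/γB + 1)*γC := mul_le_mul_of_nonneg_right hLle hγC.le
      calc (2:ℝ)^((L:ℝ)*γC) ≤ (2:ℝ)^((x/γB+1)*γC) :=
            Real.rpow_le_rpow_of_exponent_le one_le_two hexp
        _ = (2:ℝ)^(x*p) * (2:ℝ)^γC := by
            rw [← Real.rpow_add two_pos]; congr 1; rw [hpdef]; field_simp
        _ = (a/ε)^p * q := by
            rw [Real.rpow_mul (by norm_num : (0:ℝ) ≤ 2), hxdef,
              Real.rpow_logb two_pos (by norm_num) (by positivity), hqdef]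
        _ = q * a^p * ε^(-p) := by
            rw [Real.div_rpow ha.le hε.le, Real.rpow_neg hε.le, div_eq_mul_inv]; ring
    have hεp : (0:ℝ) < ε ^ (-p) := Real.rpow_pos_of_pos hε _
    calc ∑ k ∈ Finset.Icc 1 L, (m k : ℝ) * W L k
        ≤ ∑ k ∈ Finset.Icc 1 L, (K*c*ε^(-2:ℝ)*r^k + c*q^k) := Finset.sum_le_sum hcost1
      _ = K*c*ε^(-2:ℝ) * (∑ k ∈ Finset.Icc 1 L, r^k)
            + c * (∑ k ∈ Finset.Icc 1 L, q^k) := by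
          rw [Finset.sum_add_distrib, Finset.mul_sum, Finset.mul_sum]
      _ ≤ K*c*ε^(-2:ℝ) * Sr + c * (q * (q * a^p * ε^(-p)) / (q-1)) := by
          apply add_le_add
          · exact mul_le_mul_of_nonneg_left
              ((geom_Icc_le_of_lt_one' hr0 hr1 L).trans_eq hSrdef.symm) (by positivity)
          · apply mul_le_mul_of_nonneg_left _ hc.le
            refine (geom_Icc_le_of_one_lt' hq1 L).trans ?_
            have hq1' : (0:ℝ) < q - 1 := by linarith
            rw [div_le_div_iff₀ hq1' hq1']
            apply mul_le_mul_of_nonneg_right _ hq1'.le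
            exact mul_le_mul_of_nonneg_left hqL hq0.le
      _ = A * ε^(-2:ℝ) + B * ε^(-p) := by
          rw [hAdef, hBdef]; ring
      _ ≤ max A B * (ε ^ (-γC / γB) + ε ^ (-2:ℝ)) := by
          rw [show -γC/γB = -p by rw [hpdef, neg_div]]
          have h1 : A * ε^(-2:ℝ) ≤ max A B * ε^(-2:ℝ) :=
            mul_le_mul_of_nonneg_right (le_max_left _ _) hE.le
          have h2'' : B * ε^(-p) ≤ max A B * ε^(-p) :=
            mul_le_mul_of_nonneg_right (le_max_right _ _) hεp.le
          rw [mul_add]; linarith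
end

section
/- Suppose for all k ≤ L and all L ∈ ℕ: α^L = Σ_{k=1}^L β^k with β^k supported on S^k, |(α^L)ᵀμ − E[Z]| ≤ c·2^{−Lγ_B}, (β^k)ᵀCβ^k ≤ c·2^{−kγ_V}, and W_k ≤ c·2^{kγ_C} with γ_C > γ_V. Then for every ε > 0 small enough there exist L and sample numbers m_1,…,m_L ∈ ℕ such that the linear unbiased estimator achieves MSE ≤ ε² with cost bounded by c'(ε^{−γ_C/γ_B} + ε^{−2−(γ_C−γ_V)/γ_B}). -/
open Finset MeasureTheory ProbabilityTheory

private lemma geom_Icc_le {r : ℝ} (hr : 1 < r) (L : ℕ) :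
    ∑ k ∈ Finset.Icc 1 L, r ^ k ≤ r ^ L * (r / (r - 1)) := by
  have h0 : (0:ℝ) < r - 1 := by linarith
  have hrpos : (0:ℝ) < r := by linarith
  have h1 : ∑ k ∈ Finset.Icc 1 L, r ^ k ≤ ∑ k ∈ Finset.range (L+1), r ^ k := by
    apply Finset.sum_le_sum_of_subset_of_nonneg
    · intro k hk
      simp only [Finset.mem_Icc] at hk
      simp only [Finset.mem_range]; omega
    · intro i _ _; positivity
  have h2 : ∑ k ∈ Finset.range (L+1), r ^ k = (r ^ (L+1) - 1) / (r - 1) :=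
    geom_sum_eq hr.ne' (L+1)
  have h3 : (r ^ (L+1) - 1) / (r - 1) ≤ r ^ (L+1) / (r - 1) := by
    gcongr; linarith
  have h4 : r ^ (L+1) / (r - 1) = r ^ L * (r / (r - 1)) := by
    rw [pow_succ]; ring
  linarith [h1, h2 ▸ h1]

set_option maxHeartbeats 1000000 in
/-- Theorem 2.3, case `γ_C > γ_V`: under the bias assumption (M1) on the linear
combination `α^L`, the group-variance decay (M2) for the coefficients `β^k`
(with `(β^k)ᵀCβ^k = Var(∑_{ℓ∈S^k} β^k_ℓ Z_ℓ)`), and the group-cost growth (M3),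
for every small `ε > 0` there are a level `L` and sample numbers `m_k ≥ 1` such that
the linear unbiased estimator (whose MSE, by independence of the sample groups, equals
the squared bias plus `∑_k Var(∑_{ℓ∈S^k} β^k_ℓ Z_ℓ)/m_k`) achieves MSE `≤ ε²` with
cost `∑_k m_k W_k ≤ c'(ε^{−γ_C/γ_B} + ε^{−2−(γ_C−γ_V)/γ_B})`. -/
theorem stmt_14 {Ω : Type*} [MeasurableSpace Ω] (P : Measure Ω) [IsProbabilityMeasure P]
    (Z : Ω → ℝ) (Zs : ℕ → Ω → ℝ) (hZ : Integrable Z P) (hZs : ∀ ℓ, MemLp (Zs ℓ) 2 P)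
    (S : ℕ → ℕ → Finset ℕ) (β : ℕ → ℕ → ℕ → ℝ) (αv : ℕ → ℕ → ℝ) (W : ℕ → ℕ → ℝ)
    (c γB γV γC : ℝ) (hc : 0 < c) (hγB : 0 < γB) (hγV : 0 < γV) (hγC : 0 < γC)
    (hCV : γV < γC) (hWpos : ∀ L k, 0 < W L k)
    (hM0 : ∀ L ℓ, αv L ℓ = ∑ k ∈ Finset.Icc 1 L, β L k ℓ)
    (hM0' : ∀ L k ℓ, ℓ ∉ S L k → β L k ℓ = 0)
    (hM1 : ∀ L : ℕ, 1 ≤ L →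
      |(∑ ℓ ∈ Finset.Icc 1 L, αv L ℓ * ∫ ω, Zs ℓ ω ∂P) - ∫ ω, Z ω ∂P|
        ≤ c * (2 : ℝ) ^ (-(L : ℝ) * γB))
    (hM2 : ∀ L k : ℕ, 1 ≤ k → k ≤ L →
      variance (fun ω => ∑ ℓ ∈ S L k, β L k ℓ * Zs ℓ ω) P
        ≤ c * (2 : ℝ) ^ (-(k : ℝ) * γV))
    (hM3 : ∀ L k : ℕ, 1 ≤ k → k ≤ L → W L k ≤ c * (2 : ℝ) ^ ((k : ℝ) * γC)) :
    ∃ c' > 0, ∃ ε₀ > 0, ∀ ε : ℝ, 0 < ε → ε ≤ ε₀ →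
      ∃ (L : ℕ) (m : ℕ → ℕ), 1 ≤ L ∧ (∀ k ∈ Finset.Icc 1 L, 1 ≤ m k) ∧
        ((∑ ℓ ∈ Finset.Icc 1 L, αv L ℓ * ∫ ω, Zs ℓ ω ∂P) - ∫ ω, Z ω ∂P) ^ 2
            + ∑ k ∈ Finset.Icc 1 L,
                variance (fun ω => ∑ ℓ ∈ S L k, β L k ℓ * Zs ℓ ω) P / (m k : ℝ)
          ≤ ε ^ 2 ∧
        ∑ k ∈ Finset.Icc 1 L, (m k : ℝ) * W L k
          ≤ c' * (ε ^ (-γC / γB) + ε ^ (-2 - (γC - γV) / γB)) := by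
  have h2 : (1:ℝ) < 2 := one_lt_two
  have hsqrt2 : (1:ℝ) < Real.sqrt 2 := by
    nlinarith [Real.sq_sqrt (show (0:ℝ) ≤ 2 by norm_num), Real.sqrt_nonneg 2]
  have hsc : 0 < Real.sqrt 2 * c := mul_pos (by linarith) hc
  -- constants
  set δ : ℝ := (γC - γV)/2 with hδdef
  have hδ : 0 < δ := by rw [hδdef]; linarith
  set r : ℝ := (2:ℝ) ^ δ with hrdef
  have hr1 : 1 < r := Real.one_lt_rpow_iff_of_pos two_pos |>.2 (Or.inl ⟨h2, hδ⟩)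
  have hrpos : 0 < r := lt_trans one_pos hr1
  set Cd : ℝ := r / (r - 1) with hCddef
  have hCdpos : 0 < Cd := div_pos hrpos (by linarith)
  set uC : ℝ := (2:ℝ) ^ γC with huCdef
  have huC1 : 1 < uC := Real.one_lt_rpow_iff_of_pos two_pos |>.2 (Or.inl ⟨h2, hγC⟩)
  have huCpos : 0 < uC := lt_trans one_pos huC1
  set CC : ℝ := uC / (uC - 1) with hCCdef
  have hCCpos : 0 < CC := div_pos huCpos (by linarith)
  set t1 : ℝ := γC / γB with ht1def
  set t2 : ℝ := (γC - γV) / γB with ht2def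
  have ht1 : 0 < t1 := div_pos hγC hγB
  have ht2 : 0 < t2 := div_pos (by linarith) hγB
  set A1 : ℝ := (2:ℝ)^(γC-γV) * (Real.sqrt 2 * c) ^ t2 with hA1def
  set A2 : ℝ := (2:ℝ)^γC * (Real.sqrt 2 * c) ^ t1 with hA2def
  have hA1 : 0 < A1 := mul_pos (Real.rpow_pos_of_pos two_pos _) (Real.rpow_pos_of_pos hsc _)
  have hA2 : 0 < A2 := mul_pos (Real.rpow_pos_of_pos two_pos _) (Real.rpow_pos_of_pos hsc _)
  refine ⟨2*c^2*Cd^2*A1 + c*CC*A2, by positivity, min c 1, lt_min hc one_pos, ?_⟩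
  intro ε hε hεle
  have hεc : ε ≤ c := hεle.trans (min_le_left _ _)
  have hε1 : ε ≤ 1 := hεle.trans (min_le_right _ _)
  -- choice of L
  set y : ℝ := Real.sqrt 2 * c / ε with hydef
  have hypos : 0 < y := div_pos hsc hε
  have hy1 : 1 < y := by
    rw [hydef, lt_div_iff₀ hε, one_mul]
    calc ε ≤ c := hεc
      _ = 1 * c := (one_mul c).symm
      _ < Real.sqrt 2 * c := by exact mul_lt_mul_of_pos_right hsqrt2 hc
  have hlogy : 0 < Real.logb 2 y := Real.logb_pos h2 hy1
  set x : ℝ := Real.logb 2 y / γB with hxdef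
  have hx : 0 < x := div_pos hlogy hγB
  set L : ℕ := ⌈x⌉₊ with hLdef
  have hL1 : 1 ≤ L := Nat.ceil_pos.2 hx
  have hxL : x ≤ (L:ℝ) := Nat.le_ceil x
  have hLx : (L:ℝ) ≤ x + 1 := (Nat.ceil_lt_add_one hx.le).le
  have hxγB : x * γB = Real.logb 2 y := div_mul_cancel₀ _ hγB.ne'
  have h2x : (2:ℝ) ^ (x * γB) = y := by
    rw [hxγB]; exact Real.rpow_logb two_pos (by norm_num) hypos
  -- bias bound
  have hbias_exp : (2:ℝ) ^ (-(L:ℝ) * γB) ≤ ε / (Real.sqrt 2 * c) := by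
    have h1 : (2:ℝ) ^ (-(L:ℝ) * γB) ≤ (2:ℝ) ^ (-(x*γB)) :=
      Real.rpow_le_rpow_of_exponent_le one_le_two (by nlinarith)
    rw [Real.rpow_neg two_pos.le, h2x] at h1
    calc (2:ℝ) ^ (-(L:ℝ) * γB) ≤ y⁻¹ := h1
      _ = ε / (Real.sqrt 2 * c) := by rw [hydef, inv_div]
  set B : ℝ := (∑ ℓ ∈ Finset.Icc 1 L, αv L ℓ * ∫ ω, Zs ℓ ω ∂P) - ∫ ω, Z ω ∂P with hBdef
  have hbias2 : B ^ 2 ≤ ε^2 / 2 := by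
    have h1 : |B| ≤ ε / Real.sqrt 2 := by
      calc |B| ≤ c * (2:ℝ) ^ (-(L:ℝ)*γB) := hM1 L hL1
        _ ≤ c * (ε / (Real.sqrt 2 * c)) := by
            exact mul_le_mul_of_nonneg_left hbias_exp hc.le
        _ = ε / Real.sqrt 2 := by field_simp
    calc B^2 = |B|^2 := (sq_abs B).symm
      _ ≤ (ε/Real.sqrt 2)^2 := pow_le_pow_left₀ (abs_nonneg _) h1 2
      _ = ε^2/2 := by rw [div_pow, Real.sq_sqrt two_pos.le]
  -- sample numbers
  set s : ℝ := (γV + γC)/2 with hsdef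
  set q : ℝ := (2:ℝ)^(-s) with hqdef
  have hqpos : 0 < q := Real.rpow_pos_of_pos two_pos _
  set K : ℝ := 2*c/ε^2 * Cd * r^L with hKdef
  have hKpos : 0 < K := by positivity
  set m : ℕ → ℕ := fun k => ⌈K * q^k⌉₊ with hmdef
  have hm1 : ∀ k, 1 ≤ m k := fun k => Nat.ceil_pos.2 (by positivity)
  have hmlb : ∀ k, K * q^k ≤ (m k : ℝ) := fun k => Nat.le_ceil _
  have hmub : ∀ k, (m k : ℝ) ≤ K * q^k + 1 :=
    fun k => (Nat.ceil_lt_add_one (by positivity)).le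
  set uV : ℝ := (2:ℝ)^(-γV) with huVdef
  have huVpos : 0 < uV := Real.rpow_pos_of_pos two_pos _
  have hid1 : uV / q = r := by
    rw [huVdef, hqdef, ← Real.rpow_sub two_pos, hrdef]
    congr 1
    rw [hsdef, hδdef]; ring
  have hid2 : q * uC = r := by
    rw [hqdef, huCdef, ← Real.rpow_add two_pos, hrdef]
    congr 1
    rw [hsdef, hδdef]; ring
  -- variance sum bound
  have hvar_term : ∀ k ∈ Finset.Icc 1 L,
      variance (fun ω => ∑ ℓ ∈ S L k, β L k ℓ * Zs ℓ ω) P / (m k : ℝ)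
        ≤ (c / K) * r ^ k := by
    intro k hk
    obtain ⟨hk1, hkL⟩ := Finset.mem_Icc.1 hk
    have hV := hM2 L k hk1 hkL
    have h2kV : c * (2:ℝ)^(-(k:ℝ)*γV) = c * uV ^ k := by
      rw [huVdef, ← Real.rpow_natCast ((2:ℝ)^(-γV)) k, ← Real.rpow_mul two_pos.le]
      congr 2; ring
    rw [h2kV] at hV
    have hmk : (0:ℝ) < K * q^k := by positivity
    calc variance (fun ω => ∑ ℓ ∈ S L k, β L k ℓ * Zs ℓ ω) P / (m k : ℝ)
        ≤ (c * uV^k) / (K * q^k) := div_le_div₀ (by positivity) hV hmk (hmlb k)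
      _ = (c/K) * (uV/q)^k := by rw [div_pow]; ring
      _ = (c/K) * r^k := by rw [hid1]
  have hvar_sum : ∑ k ∈ Finset.Icc 1 L,
      variance (fun ω => ∑ ℓ ∈ S L k, β L k ℓ * Zs ℓ ω) P / (m k : ℝ) ≤ ε^2/2 := by
    calc ∑ k ∈ Finset.Icc 1 L,
          variance (fun ω => ∑ ℓ ∈ S L k, β L k ℓ * Zs ℓ ω) P / (m k : ℝ)
        ≤ ∑ k ∈ Finset.Icc 1 L, (c/K) * r^k := Finset.sum_le_sum hvar_term
      _ = (c/K) * ∑ k ∈ Finset.Icc 1 L, r^k := (Finset.mul_sum _ _ _).symm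
      _ ≤ (c/K) * (r^L * Cd) := by
          apply mul_le_mul_of_nonneg_left (geom_Icc_le hr1 L) (by positivity)
      _ = ε^2/2 := by
          rw [hKdef]; field_simp
  -- cost bound
  have hcost_term : ∀ k ∈ Finset.Icc 1 L,
      (m k : ℝ) * W L k ≤ c*K*r^k + c*uC^k := by
    intro k hk
    obtain ⟨hk1, hkL⟩ := Finset.mem_Icc.1 hk
    have hW := hM3 L k hk1 hkL
    have h2kC : c * (2:ℝ)^((k:ℝ)*γC) = c * uC ^ k := by
      rw [huCdef, ← Real.rpow_natCast ((2:ℝ)^γC) k, ← Real.rpow_mul two_pos.le]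
      congr 2; ring
    rw [h2kC] at hW
    calc (m k : ℝ) * W L k ≤ (K*q^k+1) * (c*uC^k) :=
          mul_le_mul (hmub k) hW (hWpos L k).le (by positivity)
      _ = c*K*(q*uC)^k + c*uC^k := by rw [mul_pow]; ring
      _ = c*K*r^k + c*uC^k := by rw [hid2]
  have hcost1 : ∑ k ∈ Finset.Icc 1 L, (m k : ℝ) * W L k
      ≤ c*K*(r^L*Cd) + c*(uC^L*CC) := by
    calc ∑ k ∈ Finset.Icc 1 L, (m k : ℝ) * W L k
        ≤ ∑ k ∈ Finset.Icc 1 L, (c*K*r^k + c*uC^k) := Finset.sum_le_sum hcost_term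
      _ = c*K*(∑ k ∈ Finset.Icc 1 L, r^k) + c*(∑ k ∈ Finset.Icc 1 L, uC^k) := by
          rw [Finset.sum_add_distrib, Finset.mul_sum, Finset.mul_sum]
      _ ≤ c*K*(r^L*Cd) + c*(uC^L*CC) := by
          have g1 := geom_Icc_le hr1 L
          have g2 := geom_Icc_le huC1 L
          have e1 : r^L * (r/(r-1)) = r^L * Cd := by rw [hCddef]
          have e2 : uC^L * (uC/(uC-1)) = uC^L * CC := by rw [hCCdef]
          rw [e1] at g1; rw [e2] at g2
          have := mul_le_mul_of_nonneg_left g1 (by positivity : (0:ℝ) ≤ c*K)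
          have := mul_le_mul_of_nonneg_left g2 (by positivity : (0:ℝ) ≤ c)
          linarith
  -- bounding the powers of 2^L
  have key : ∀ a : ℝ, 0 ≤ a →
      (2:ℝ)^((L:ℝ)*a) ≤ (2:ℝ)^a * (Real.sqrt 2 * c)^(a/γB) * ε^(-(a/γB)) := by
    intro a ha
    have h1 : (2:ℝ)^((L:ℝ)*a) ≤ (2:ℝ)^((x+1)*a) :=
      Real.rpow_le_rpow_of_exponent_le one_le_two (mul_le_mul_of_nonneg_right hLx ha)
    have h2' : (2:ℝ)^((x+1)*a) = (2:ℝ)^a * (2:ℝ)^(x*a) := by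
      rw [← Real.rpow_add two_pos]; congr 1; ring
    have h3 : (2:ℝ)^(x*a) = y ^ (a/γB) := by
      rw [show x*a = (x*γB)*(a/γB) by field_simp, Real.rpow_mul two_pos.le, h2x]
    have h4 : y ^ (a/γB) = (Real.sqrt 2 * c)^(a/γB) * ε^(-(a/γB)) := by
      rw [hydef, Real.div_rpow hsc.le hε.le, Real.rpow_neg hε.le, div_eq_mul_inv]
    calc (2:ℝ)^((L:ℝ)*a) ≤ (2:ℝ)^((x+1)*a) := h1
      _ = (2:ℝ)^a * ((Real.sqrt 2 * c)^(a/γB) * ε^(-(a/γB))) := by rw [h2', h3, h4]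
      _ = (2:ℝ)^a * (Real.sqrt 2 * c)^(a/γB) * ε^(-(a/γB)) := by ring
  have hrLrL : r^L * r^L = (2:ℝ)^((L:ℝ)*(γC-γV)) := by
    rw [hrdef, ← Real.rpow_natCast ((2:ℝ)^δ) L, ← Real.rpow_mul two_pos.le,
      ← Real.rpow_add two_pos]
    congr 1
    rw [hδdef]; ring
  have huCL : uC^L = (2:ℝ)^((L:ℝ)*γC) := by
    rw [huCdef, ← Real.rpow_natCast ((2:ℝ)^γC) L, ← Real.rpow_mul two_pos.le]
    congr 1; ring
  have hb1 : r^L * r^L ≤ A1 * ε^(-t2) := by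
    rw [hrLrL, hA1def]
    have := key (γC-γV) (by linarith)
    rw [show (γC-γV)/γB = t2 from rfl] at this
    linarith [this]
  have hb2 : uC^L ≤ A2 * ε^(-t1) := by
    rw [huCL, hA2def]
    have := key γC hγC.le
    rw [show γC/γB = t1 from rfl] at this
    linarith [this]
  -- exponent arithmetic on ε
  have h22 : ε ^ ((-2:ℝ)) = (ε^2)⁻¹ := by
    rw [show ((-2:ℝ)) = ((-2:ℤ):ℝ) by norm_num, Real.rpow_intCast, zpow_neg]
    norm_num
  have hεt2 : ε ^ (-2 - t2) = ε^(-t2) / ε^2 := by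
    rw [show (-2 - t2 : ℝ) = (-t2) + (-2) by ring, Real.rpow_add hε, h22, div_eq_mul_inv]
  have hcost2 : c*K*(r^L*Cd) + c*(uC^L*CC)
      ≤ 2*c^2*Cd^2*A1 * ε^(-2-t2) + c*CC*A2 * ε^(-t1) := by
    have e1 : c*K*(r^L*Cd) = (2*c^2*Cd^2/ε^2) * (r^L * r^L) := by
      rw [hKdef]; ring
    have hbb1 : (2*c^2*Cd^2/ε^2) * (r^L * r^L) ≤ (2*c^2*Cd^2/ε^2) * (A1 * ε^(-t2)) := by
      apply mul_le_mul_of_nonneg_left hb1 (by positivity)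
    have e2 : (2*c^2*Cd^2/ε^2) * (A1 * ε^(-t2)) = 2*c^2*Cd^2*A1 * ε^(-2-t2) := by
      rw [hεt2]; ring
    have hbb2 : c*(uC^L*CC) ≤ c*CC*A2 * ε^(-t1) := by
      calc c*(uC^L*CC) ≤ c*((A2 * ε^(-t1))*CC) := by
            apply mul_le_mul_of_nonneg_left _ hc.le
            exact mul_le_mul_of_nonneg_right hb2 hCCpos.le
        _ = c*CC*A2 * ε^(-t1) := by ring
    calc c*K*(r^L*Cd) + c*(uC^L*CC)
        = (2*c^2*Cd^2/ε^2) * (r^L * r^L) + c*(uC^L*CC) := by rw [e1]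
      _ ≤ (2*c^2*Cd^2/ε^2) * (A1 * ε^(-t2)) + c*CC*A2 * ε^(-t1) := add_le_add hbb1 hbb2
      _ = 2*c^2*Cd^2*A1 * ε^(-2-t2) + c*CC*A2 * ε^(-t1) := by rw [e2]
  refine ⟨L, m, hL1, fun k _ => hm1 k, by linarith, ?_⟩
  have hgoal_exp1 : ε ^ (-γC/γB) = ε ^ (-t1) := by rw [ht1def, neg_div]
  have hgoal_exp2 : ε ^ (-2 - (γC-γV)/γB) = ε ^ (-2 - t2) := by rw [ht2def]
  rw [hgoal_exp1, hgoal_exp2]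
  have hp1 : 0 ≤ ε ^ (-t1) := Real.rpow_nonneg hε.le _
  have hp2 : 0 ≤ ε ^ (-2 - t2) := Real.rpow_nonneg hε.le _
  have hC1 : 0 < 2*c^2*Cd^2*A1 := by positivity
  have hC2 : 0 < c*CC*A2 := by positivity
  calc ∑ k ∈ Finset.Icc 1 L, (m k : ℝ) * W L k
      ≤ 2*c^2*Cd^2*A1 * ε^(-2-t2) + c*CC*A2 * ε^(-t1) := le_trans hcost1 hcost2
    _ ≤ (2*c^2*Cd^2*A1 + c*CC*A2) * (ε ^ (-t1) + ε ^ (-2 - t2)) := by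
        have hq1 : 0 ≤ (2*c^2*Cd^2*A1) * (ε ^ (-t1)) := by positivity
        have hq2 : 0 ≤ (c*CC*A2) * (ε ^ (-2-t2)) := by positivity
        have e : (2*c^2*Cd^2*A1 + c*CC*A2) * (ε ^ (-t1) + ε ^ (-2 - t2))
            = (2*c^2*Cd^2*A1 * ε^(-2-t2) + c*CC*A2 * ε^(-t1))
              + ((2*c^2*Cd^2*A1) * (ε ^ (-t1)) + (c*CC*A2) * (ε ^ (-2-t2))) := by ring
        rw [e]
        linarith
end
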